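/- Let γ_Z = Σ_{l=1}^n b_l δ_{z_l} be a fixed discrete probability measure in ℝ^d with distinct points, and let θ_1,…,θ_p be i.i.d. uniform on the unit sphere S^{d−1}. If p > d, then almost surely, for any probability measure α in P_2(ℝ^d), the equality W_2(P_{θ_i}#α, P_{θ_i}#γ_Z) = 0 for all i implies α = γ_Z; equivalently, γ_Z is the unique minimizer of α ↦ (1/p)Σ_i W_2²(P_{θ_i}#α, P_{θ_i}#γ_Z). -/

import Mathlib

open scoped Pointwise ENNReal

open MeasureTheory Set Metric

/-- Gram determinant vanishes iff the family is linearly dependent. -/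
lemma aux_gram_det_eq_zero_iff {F : Type*} [NormedAddCommGroup F] [InnerProductSpace ℝ F]
    {k : ℕ} (v : Fin k → F) :
    (Matrix.of fun i j => (inner ℝ (v i) (v j) : ℝ)).det = 0 ↔ ¬ LinearIndependent ℝ v := by
  constructor
  · intro h hind
    obtain ⟨c, hc0, hc⟩ := Matrix.exists_mulVec_eq_zero_iff.2 h
    have hvi : ∀ i, (inner ℝ (v i) (∑ j, c j • v j) : ℝ) = 0 := by
      intro i
      have := congrFun hc i
      simpa [Matrix.mulVec, dotProduct, inner_sum, real_inner_smul_right,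
        mul_comm] using this
    have hw : (∑ j, c j • v j) = 0 := by
      have : (inner ℝ (∑ i, c i • v i) (∑ j, c j • v j) : ℝ) = 0 := by
        rw [sum_inner]
        simp only [real_inner_smul_left]
        simp [hvi]
      exact inner_self_eq_zero.mp this
    obtain ⟨i, hi⟩ := Function.ne_iff.mp hc0
    exact hi (Fintype.linearIndependent_iff.mp hind c hw i)
  · intro h
    obtain ⟨c, hsum, i, hi⟩ := Fintype.not_linearIndependent_iff.mp h
    refine Matrix.exists_mulVec_eq_zero_iff.1 ⟨c, Function.ne_iff.mpr ⟨i, hi⟩, ?_⟩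
    funext i'
    simp only [Matrix.mulVec, dotProduct, Matrix.of_apply]
    calc ∑ j, (inner ℝ (v i') (v j) : ℝ) * c j
        = (inner ℝ (v i') (∑ j, c j • v j) : ℝ) := by
          rw [inner_sum]; simp [real_inner_smul_right, mul_comm]
      _ = 0 := by rw [hsum, inner_zero_right]

/-- A proper subspace meets the unit sphere in a `toSphere`-null set. -/
lemma aux_toSphere_submodule_null {d : ℕ}
    (W : Submodule ℝ (EuclideanSpace ℝ (Fin d))) (hW : W ≠ ⊤) :
    (volume : Measure (EuclideanSpace ℝ (Fin d))).toSphere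
      {s : sphere (0 : EuclideanSpace ℝ (Fin d)) 1 | (s : EuclideanSpace ℝ (Fin d)) ∈ W} = 0 := by
  have hWc : IsClosed (W : Set (EuclideanSpace ℝ (Fin d))) := W.closed_of_finiteDimensional
  have hm : MeasurableSet {s : sphere (0 : EuclideanSpace ℝ (Fin d)) 1 |
      (s : EuclideanSpace ℝ (Fin d)) ∈ W} :=
    (hWc.preimage continuous_subtype_val).measurableSet
  rw [Measure.toSphere_apply' _ hm]
  have hsub : (Set.Ioo (0:ℝ) 1 • (Subtype.val ''
      {s : sphere (0 : EuclideanSpace ℝ (Fin d)) 1 | (s : EuclideanSpace ℝ (Fin d)) ∈ W}))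
      ⊆ (W : Set (EuclideanSpace ℝ (Fin d))) := by
    rintro x ⟨r, hr, y, ⟨s, hs, rfl⟩, rfl⟩
    exact W.smul_mem r hs
  rw [measure_mono_null hsub (Measure.addHaar_submodule _ W hW)]
  simp

lemma aux_nu_submodule_null {d : ℕ}
    (ν : Measure (Metric.sphere (0 : EuclideanSpace ℝ (Fin d)) 1))
    (hν : ν = ((volume : Measure (EuclideanSpace ℝ (Fin d))).toSphere Set.univ)⁻¹ •
      (volume : Measure (EuclideanSpace ℝ (Fin d))).toSphere)
    (W : Submodule ℝ (EuclideanSpace ℝ (Fin d))) (hW : W ≠ ⊤) :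
    ν {s : sphere (0 : EuclideanSpace ℝ (Fin d)) 1 | (s : EuclideanSpace ℝ (Fin d)) ∈ W} = 0 := by
  rw [hν, Measure.smul_apply, aux_toSphere_submodule_null W hW, smul_zero]

lemma aux_nu_hyperplane_null {d : ℕ}
    (ν : Measure (Metric.sphere (0 : EuclideanSpace ℝ (Fin d)) 1))
    (hν : ν = ((volume : Measure (EuclideanSpace ℝ (Fin d))).toSphere Set.univ)⁻¹ •
      (volume : Measure (EuclideanSpace ℝ (Fin d))).toSphere)
    {v : EuclideanSpace ℝ (Fin d)} (hv : v ≠ 0) :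
    ν {s : sphere (0 : EuclideanSpace ℝ (Fin d)) 1 |
        (inner ℝ (s : EuclideanSpace ℝ (Fin d)) v : ℝ) = 0} = 0 := by
  have : {s : sphere (0 : EuclideanSpace ℝ (Fin d)) 1 |
      (inner ℝ (s : EuclideanSpace ℝ (Fin d)) v : ℝ) = 0}
      = {s : sphere (0 : EuclideanSpace ℝ (Fin d)) 1 |
      (s : EuclideanSpace ℝ (Fin d)) ∈ LinearMap.ker (innerSL ℝ v : EuclideanSpace ℝ (Fin d) →ₗ[ℝ] ℝ)} := by
    ext s
    simp only [Set.mem_setOf_eq, LinearMap.mem_ker, ContinuousLinearMap.coe_coe, innerSL_apply_apply]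
    rw [real_inner_comm]
  rw [this]
  refine aux_nu_submodule_null ν hν _ (fun h => hv ?_)
  have hv2 : v ∈ LinearMap.ker (innerSL ℝ v : EuclideanSpace ℝ (Fin d) →ₗ[ℝ] ℝ) := h ▸ Submodule.mem_top
  have : (inner ℝ v v : ℝ) = 0 := by simpa using hv2
  exact inner_self_eq_zero.mp this

lemma aux_cont_gram {d k : ℕ} : Continuous fun v : Fin k → Metric.sphere (0 : EuclideanSpace ℝ (Fin d)) 1 =>
    (Matrix.of fun i j => (inner ℝ (v i : EuclideanSpace ℝ (Fin d)) (v j : EuclideanSpace ℝ (Fin d)) : ℝ)).det := by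
  have h1 : Continuous fun v : Fin k → Metric.sphere (0 : EuclideanSpace ℝ (Fin d)) 1 =>
      (Matrix.of fun i j => (inner ℝ (v i : EuclideanSpace ℝ (Fin d)) (v j : EuclideanSpace ℝ (Fin d)) : ℝ)
        : Matrix (Fin k) (Fin k) ℝ) := by
    apply continuous_matrix
    intro i j
    have c1 : Continuous fun v : Fin k → Metric.sphere (0 : EuclideanSpace ℝ (Fin d)) 1 =>
        (v i : EuclideanSpace ℝ (Fin d)) := continuous_subtype_val.comp (continuous_apply i)
    have c2 : Continuous fun v : Fin k → Metric.sphere (0 : EuclideanSpace ℝ (Fin d)) 1 =>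
        (v j : EuclideanSpace ℝ (Fin d)) := continuous_subtype_val.comp (continuous_apply j)
    exact c1.inner c2
  exact h1.matrix_det

lemma aux_gram_pi_null {d : ℕ}
    (ν : Measure (Metric.sphere (0 : EuclideanSpace ℝ (Fin d)) 1))
    [IsProbabilityMeasure ν]
    (hν : ν = ((volume : Measure (EuclideanSpace ℝ (Fin d))).toSphere Set.univ)⁻¹ •
      (volume : Measure (EuclideanSpace ℝ (Fin d))).toSphere) :
    ∀ k, k ≤ d → Measure.pi (fun _ : Fin k => ν)
      {v : Fin k → sphere (0 : EuclideanSpace ℝ (Fin d)) 1 |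
        (Matrix.of fun i j =>
          (inner ℝ (v i : EuclideanSpace ℝ (Fin d)) (v j : EuclideanSpace ℝ (Fin d)) : ℝ)).det = 0} = 0 := by
  intro k
  induction k with
  | zero =>
    intro _
    convert measure_empty (μ := Measure.pi (fun _ : Fin 0 => ν))
    ext v
    simp [Matrix.det_fin_zero]
  | succ k ih =>
    intro hk
    have hkd : k ≤ d := Nat.le_of_succ_le hk
    haveI : ∀ i : Fin (k+1), SigmaFinite ((fun _ : Fin (k+1) => ν) i) := fun _ => (by infer_instance : SigmaFinite ν)
    set T : Set (Fin (k+1) → sphere (0 : EuclideanSpace ℝ (Fin d)) 1) := {v | (Matrix.of fun i j =>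
      (inner ℝ (v i : EuclideanSpace ℝ (Fin d)) (v j : EuclideanSpace ℝ (Fin d)) : ℝ)).det = 0}
    have hTm : MeasurableSet T :=
      (aux_cont_gram.measurable (measurableSet_singleton (0:ℝ)))
    set e := MeasurableEquiv.piFinSuccAbove (fun _ : Fin (k+1) => sphere (0 : EuclideanSpace ℝ (Fin d)) 1) 0
    have mp := (measurePreserving_piFinSuccAbove (fun _ : Fin (k+1) => ν) 0).symm
    have key : Measure.pi (fun _ : Fin (k+1) => ν) T
        = (ν.prod (Measure.pi fun _ : Fin k => ν)) (e.symm ⁻¹' T) :=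
      (mp.measure_preimage hTm.nullMeasurableSet).symm
    -- identify the preimage
    have hcons : ∀ (s : sphere (0 : EuclideanSpace ℝ (Fin d)) 1) (r : Fin k → sphere (0 : EuclideanSpace ℝ (Fin d)) 1), ((s, r) ∈ e.symm ⁻¹' T ↔
        ¬ LinearIndependent ℝ (Fin.cons (s : EuclideanSpace ℝ (Fin d))
          (fun j => (r j : EuclideanSpace ℝ (Fin d))))) := by
      intro s r
      have hfun : (fun i => ((e.symm (s, r)) i : EuclideanSpace ℝ (Fin d)))
          = Fin.cons (s : EuclideanSpace ℝ (Fin d)) (fun j => (r j : EuclideanSpace ℝ (Fin d))) := by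
        have he : e.symm (s, r) = Fin.cons s r := by
          rw [MeasurableEquiv.piFinSuccAbove_symm_apply]
          exact Fin.insertNth_zero' s r
        rw [he]
        funext j
        refine Fin.cases ?_ (fun j' => ?_) j
        · simp
        · simp
      constructor
      · intro h
        rw [← hfun]
        exact (aux_gram_det_eq_zero_iff _).mp h
      · intro h
        have := (aux_gram_det_eq_zero_iff (fun i => ((e.symm (s, r)) i : EuclideanSpace ℝ (Fin d)))).mpr
          (by rw [hfun]; exact h)
        exact this
    rw [key]
    have hT' : MeasurableSet (⇑e.symm ⁻¹' T) := e.symm.measurable hTm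
    have hBm : MeasurableSet {r : Fin k → sphere (0 : EuclideanSpace ℝ (Fin d)) 1 |
        (Matrix.of fun i j => (inner ℝ (r i : EuclideanSpace ℝ (Fin d))
          (r j : EuclideanSpace ℝ (Fin d)) : ℝ)).det = 0} :=
      aux_cont_gram.measurable (measurableSet_singleton (0:ℝ))
    set B : Set (Fin k → sphere (0 : EuclideanSpace ℝ (Fin d)) 1) := {r |
        (Matrix.of fun i j => (inner ℝ (r i : EuclideanSpace ℝ (Fin d))
          (r j : EuclideanSpace ℝ (Fin d)) : ℝ)).det = 0} with hBdef
    have h1 : (ν.prod (Measure.pi fun _ : Fin k => ν)) (univ ×ˢ B) = 0 := by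
      rw [Measure.prod_prod, ih hkd, mul_zero]
    have h2 : (ν.prod (Measure.pi fun _ : Fin k => ν)) (⇑e.symm ⁻¹' T \ univ ×ˢ B) = 0 := by
      rw [Measure.prod_apply_symm (hT'.diff (MeasurableSet.univ.prod hBm))]
      have hzero : ∀ r : Fin k → sphere (0 : EuclideanSpace ℝ (Fin d)) 1,
          ν ((fun x => (x, r)) ⁻¹' (⇑e.symm ⁻¹' T \ univ ×ˢ B)) = 0 := by
        intro r
        by_cases hr : r ∈ B
        · have : ((fun x => (x, r)) ⁻¹' (⇑e.symm ⁻¹' T \ univ ×ˢ B)) = ∅ := by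
            ext s
            simp only [Set.mem_preimage, Set.mem_diff, Set.mem_prod, Set.mem_univ, true_and,
              Set.mem_empty_iff_false, iff_false, not_and, not_not]
            intro _
            exact hr
          rw [this, measure_empty]
        · have hind : LinearIndependent ℝ (fun j => ((r j : EuclideanSpace ℝ (Fin d)))) := by
            by_contra hc
            exact hr ((aux_gram_det_eq_zero_iff _).mpr hc)
          set W := Submodule.span ℝ (Set.range fun j => (r j : EuclideanSpace ℝ (Fin d))) with hWdef
          have hW : W ≠ ⊤ := by
            intro htop
            classical
            have hle : Module.finrank ℝ W ≤ k := by
              refine le_trans (finrank_span_le_card _) ?_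
              rw [Set.toFinset_card]
              simpa using Fintype.card_range_le (fun j => (r j : EuclideanSpace ℝ (Fin d)))
            rw [htop, finrank_top, finrank_euclideanSpace_fin] at hle
            omega
          refine measure_mono_null ?_ (aux_nu_submodule_null ν hν W hW)
          rintro s ⟨hsT, hsU⟩
          have hdep := (hcons s r).mp hsT
          rw [linearIndependent_fin_cons] at hdep
          push_neg at hdep
          exact hdep hind
      simp only [hzero]
      simp
    refine measure_mono_null (fun x hx => ?_) (measure_union_null h1 h2)
    by_cases hxB : x ∈ univ ×ˢ B
    · exact Or.inl hxB
    · exact Or.inr ⟨hx, hxB⟩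

lemma aux_proj_null {d : ℕ} {X : Type*} [MeasurableSpace X] (ν : Measure X)
    [IsProbabilityMeasure ν]
    (B : Set (Fin d → X)) (hBm : MeasurableSet B) (hB : Measure.pi (fun _ : Fin d => ν) B = 0) :
    ∀ m (hm : d ≤ m), Measure.pi (fun _ : Fin m => ν)
      {r : Fin m → X | (fun i : Fin d => r (Fin.castLE hm i)) ∈ B} = 0 := by
  refine Nat.le_induction ?_ ?_
  · have hset : {r : Fin d → X | (fun i : Fin d => r (Fin.castLE (le_refl d) i)) ∈ B} = B := by
      ext r
      have hr : (fun i : Fin d => r (Fin.castLE (le_refl d) i)) = r := by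
        funext i; exact congrArg r (Fin.ext rfl)
      rw [Set.mem_setOf_eq, hr]
    rw [hset]; exact hB
  · intro m hm ih
    set T : Set (Fin (m+1) → X) :=
      {r | (fun i : Fin d => r (Fin.castLE (Nat.le_succ_of_le hm) i)) ∈ B} with hT
    have hg : Measurable fun (r : Fin (m+1) → X) => fun i : Fin d =>
        r (Fin.castLE (Nat.le_succ_of_le hm) i) :=
      measurable_pi_lambda _ (fun i => measurable_pi_apply _)
    have hTm : MeasurableSet T := hg hBm
    set e := MeasurableEquiv.piFinSuccAbove (fun _ : Fin (m+1) => X) (Fin.last m)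
    have mp := (measurePreserving_piFinSuccAbove (fun _ : Fin (m+1) => ν) (Fin.last m)).symm
    have key : Measure.pi (fun _ : Fin (m+1) => ν) T
        = (ν.prod (Measure.pi fun _ : Fin m => ν)) (⇑e.symm ⁻¹' T) :=
      (mp.measure_preimage hTm.nullMeasurableSet).symm
    have hpre : ⇑e.symm ⁻¹' T = univ ×ˢ {r : Fin m → X | (fun i : Fin d => r (Fin.castLE hm i)) ∈ B} := by
      ext ⟨x, r⟩
      have hfun : (fun i : Fin d => (e.symm (x, r)) (Fin.castLE (Nat.le_succ_of_le hm) i))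
          = fun i : Fin d => r (Fin.castLE hm i) := by
        funext i
        rw [MeasurableEquiv.piFinSuccAbove_symm_apply]
        have hidx : Fin.castLE (Nat.le_succ_of_le hm) i = (Fin.last m).succAbove (Fin.castLE hm i) := by
          rw [Fin.succAbove_last]
          exact Fin.ext rfl
        rw [hidx, Fin.insertNthEquiv_apply]
        exact Fin.insertNth_apply_succAbove _ _ _ _
      simp only [Set.mem_preimage, Set.mem_prod, Set.mem_univ, true_and, hT, Set.mem_setOf_eq, hfun]
    rw [key, hpre, Measure.prod_prod, ih, mul_zero]

lemma aux_solve {d : ℕ} (M : Matrix (Fin d) (Fin d) ℝ) (hdet : M.det ≠ 0) {y c : Fin d → ℝ}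
    (h : M.mulVec y = c) : y = M⁻¹.mulVec c := by
  rw [← h, Matrix.mulVec_mulVec, Matrix.nonsing_inv_mul M (isUnit_iff_ne_zero.mpr hdet),
    Matrix.one_mulVec]

lemma aux_gram_sq {d : ℕ} (v : Fin d → EuclideanSpace ℝ (Fin d)) :
    (Matrix.of fun i j => (inner ℝ (v i) (v j) : ℝ)).det
      = ((Matrix.of fun i j => v i j : Matrix (Fin d) (Fin d) ℝ).det) ^ 2 := by
  have h : (Matrix.of fun i j => (inner ℝ (v i) (v j) : ℝ))
      = (Matrix.of fun i j => v i j : Matrix (Fin d) (Fin d) ℝ)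
        * Matrix.transpose (Matrix.of fun i j => v i j : Matrix (Fin d) (Fin d) ℝ) := by
    ext i j
    simp [Matrix.mul_apply, PiLp.inner_apply, RCLike.inner_apply]
    exact Finset.sum_congr rfl fun _ _ => mul_comm _ _
  rw [h, Matrix.det_mul, Matrix.det_transpose, sq]

set_option maxHeartbeats 1000000 in
theorem ae_sliced_wasserstein_separability
    (d n p : ℕ) (hp : p > d)
    (z : Fin n → EuclideanSpace ℝ (Fin d)) (hz : Function.Injective z)
    (b : Fin n → ℝ) (hb : ∀ l, 0 < b l) (hbsum : ∑ l, b l = 1)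
    (γZ : Measure (EuclideanSpace ℝ (Fin d)))
    (hγZ : γZ = ∑ l, ENNReal.ofReal (b l) • Measure.dirac (z l))
    (ν : Measure (Metric.sphere (0 : EuclideanSpace ℝ (Fin d)) 1))
    [IsProbabilityMeasure ν]
    (hν : ν = ((volume : Measure (EuclideanSpace ℝ (Fin d))).toSphere Set.univ)⁻¹ •
      (volume : Measure (EuclideanSpace ℝ (Fin d))).toSphere) :
    (Measure.pi fun _ : Fin p => ν)
      {θ : Fin p → Metric.sphere (0 : EuclideanSpace ℝ (Fin d)) 1 |
        ∀ α : Measure (EuclideanSpace ℝ (Fin d)), IsProbabilityMeasure α →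
          (∫⁻ x, ENNReal.ofReal (‖x‖ ^ 2) ∂α) < ⊤ →
          (∀ i, α.map (fun x => @inner ℝ _ _ ((θ i : EuclideanSpace ℝ (Fin d))) x) =
                γZ.map (fun x => @inner ℝ _ _ ((θ i : EuclideanSpace ℝ (Fin d))) x)) →
          α = γZ} = 1 := by
  classical
  -- degenerate cases
  rcases Nat.eq_zero_or_pos n with hn0 | hn
  · exfalso; subst hn0; simp at hbsum
  rcases Nat.eq_zero_or_pos d with hd0 | hd
  · exfalso
    subst hd0
    haveI hie : IsEmpty (Metric.sphere (0 : EuclideanSpace ℝ (Fin 0)) 1) := by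
      constructor
      rintro ⟨x, hx⟩
      have hx0 : x = 0 := PiLp.ext fun i => Fin.elim0 i
      rw [Metric.mem_sphere, hx0, dist_self] at hx
      exact one_ne_zero hx.symm
    have h1 : (ν Set.univ) = 1 := measure_univ
    rw [Set.univ_eq_empty_iff.mpr hie, measure_empty] at h1
    exact zero_ne_one h1
  obtain ⟨q, rfl⟩ : ∃ q, p = q + 1 := ⟨p - 1, by omega⟩
  have hdq : d ≤ q := by omega
  haveI : ∀ i : Fin (q+1), SigmaFinite ((fun _ : Fin (q+1) => ν) i) :=
    fun _ => (by infer_instance : SigmaFinite ν)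
  -- notation
  set Mat : (Fin q → Metric.sphere (0 : EuclideanSpace ℝ (Fin d)) 1) → Matrix (Fin d) (Fin d) ℝ :=
    fun r => Matrix.of fun i j => (r (Fin.castLE hdq i) : EuclideanSpace ℝ (Fin d)) j with hMat
  set cvec : (Fin d → Fin n) → (Fin q → Metric.sphere (0 : EuclideanSpace ℝ (Fin d)) 1) →
      (Fin d → ℝ) :=
    fun τ r i => (inner ℝ (r (Fin.castLE hdq i) : EuclideanSpace ℝ (Fin d)) (z (τ i)) : ℝ) with hcvec
  set xstar : (Fin d → Fin n) → (Fin q → Metric.sphere (0 : EuclideanSpace ℝ (Fin d)) 1) →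
      EuclideanSpace ℝ (Fin d) :=
    fun τ r => (EuclideanSpace.equiv (Fin d) ℝ).symm ((Mat r)⁻¹.mulVec (cvec τ r)) with hxstar
  set rest : (Fin (q+1) → Metric.sphere (0 : EuclideanSpace ℝ (Fin d)) 1) →
      (Fin q → Metric.sphere (0 : EuclideanSpace ℝ (Fin d)) 1) := fun θ j => θ j.succ with hrest
  -- measurability of the basic maps
  have hMatc : Continuous Mat := by
    apply continuous_matrix; intro i j
    exact ((EuclideanSpace.proj j).continuous).comp
      (continuous_subtype_val.comp (continuous_apply _))
  have hcvecm : ∀ τ, Measurable (cvec τ) := by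
    intro τ
    apply measurable_pi_lambda; intro i
    exact (measurable_subtype_coe.comp (measurable_pi_apply _)).inner measurable_const
  have hdetm : Measurable fun r => (Mat r).det := (hMatc.matrix_det).measurable
  have hadjm : ∀ i j, Measurable fun r => (Mat r).adjugate i j := by
    intro i j
    exact (((continuous_apply j).comp ((continuous_apply i).comp
      (hMatc.matrix_adjugate))).measurable)
  have hxstarm : ∀ τ, Measurable (xstar τ) := by
    intro τ
    have h1 : Measurable fun r => ((Mat r)⁻¹).mulVec (cvec τ r) := by
      apply measurable_pi_lambda; intro i
      have hrw : (fun r => ((Mat r)⁻¹).mulVec (cvec τ r) i)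
          = fun r => ((Mat r).det)⁻¹ * (∑ j, (Mat r).adjugate i j * cvec τ r j) := by
        funext r
        rw [Matrix.inv_def, Matrix.smul_mulVec]
        simp [Matrix.mulVec, dotProduct, Ring.inverse_eq_inv]
      rw [hrw]
      refine Measurable.mul hdetm.inv ?_
      refine Finset.measurable_sum _ fun j _ => Measurable.mul (hadjm i j) ?_
      exact (measurable_pi_apply j).comp (hcvecm τ)
    exact ((EuclideanSpace.equiv (Fin d) ℝ).symm.continuous.measurable).comp h1
  have hrestm : Measurable rest := measurable_pi_lambda _ (fun j => measurable_pi_apply _)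
  -- the null sets
  set N0 : Set (Fin (q+1) → Metric.sphere (0 : EuclideanSpace ℝ (Fin d)) 1) :=
    ⋃ (l : Fin n), ⋃ (m : Fin n), ⋃ (_ : l ≠ m),
      (fun θ : Fin (q+1) → Metric.sphere (0 : EuclideanSpace ℝ (Fin d)) 1 => θ 0) ⁻¹'
        {s : Metric.sphere (0 : EuclideanSpace ℝ (Fin d)) 1 |
          (inner ℝ (s : EuclideanSpace ℝ (Fin d)) (z l - z m) : ℝ) = 0} with hN0def
  set Ndet : Set (Fin (q+1) → Metric.sphere (0 : EuclideanSpace ℝ (Fin d)) 1) :=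
    {θ | (Mat (rest θ)).det = 0} with hNdetdef
  set N2 : (Fin d → Fin n) → Fin n → Set (Fin (q+1) → Metric.sphere (0 : EuclideanSpace ℝ (Fin d)) 1) :=
    fun τ l => {θ | (Mat (rest θ)).det ≠ 0 ∧ xstar τ (rest θ) ∉ Set.range z ∧
      (inner ℝ ((θ 0 : EuclideanSpace ℝ (Fin d))) (xstar τ (rest θ) - z l) : ℝ) = 0} with hN2def
  have hinnerset_m : ∀ v : EuclideanSpace ℝ (Fin d), MeasurableSet
      {s : Metric.sphere (0 : EuclideanSpace ℝ (Fin d)) 1 |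
        (inner ℝ (s : EuclideanSpace ℝ (Fin d)) v : ℝ) = 0} := by
    intro v
    exact (Continuous.inner continuous_subtype_val continuous_const).measurable
      (measurableSet_singleton (0:ℝ))
  have hN0m : MeasurableSet N0 := by
    refine MeasurableSet.iUnion fun l => MeasurableSet.iUnion fun m => MeasurableSet.iUnion fun _ => ?_
    exact (measurable_pi_apply 0) (hinnerset_m _)
  have hNdetm : MeasurableSet Ndet :=
    (hdetm.comp hrestm) (measurableSet_singleton (0:ℝ))
  have hrangem : MeasurableSet (Set.range z) := (Set.finite_range z).measurableSet
  have hN2m : ∀ τ l, MeasurableSet (N2 τ l) := by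
    intro τ l
    refine MeasurableSet.inter ?_ (MeasurableSet.inter ?_ ?_)
    · exact (hdetm.comp hrestm) (measurableSet_singleton (0:ℝ)) |>.compl
    · exact (((hxstarm τ).comp hrestm) hrangem).compl
    · refine Measurable.inner (measurable_subtype_coe.comp (measurable_pi_apply 0)) ?_ <|
        measurableSet_singleton (0:ℝ)
      exact ((hxstarm τ).comp hrestm).sub measurable_const
  haveI : IsProbabilityMeasure (Measure.pi fun _ : Fin (q+1) => ν) := by infer_instance
  haveI : IsProbabilityMeasure (Measure.pi fun _ : Fin q => ν) := by infer_instance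
  set e0 := MeasurableEquiv.piFinSuccAbove
    (fun _ : Fin (q+1) => Metric.sphere (0 : EuclideanSpace ℝ (Fin d)) 1) 0 with he0
  have mp0 := (measurePreserving_piFinSuccAbove (fun _ : Fin (q+1) => ν) 0).symm
  have hkey : ∀ U : Set (Fin (q+1) → Metric.sphere (0 : EuclideanSpace ℝ (Fin d)) 1),
      MeasurableSet U → (Measure.pi fun _ : Fin (q+1) => ν) U
        = (ν.prod (Measure.pi fun _ : Fin q => ν)) (⇑e0.symm ⁻¹' U) :=
    fun U hU => (mp0.measure_preimage hU.nullMeasurableSet).symm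
  have he0symm : ∀ (s : Metric.sphere (0 : EuclideanSpace ℝ (Fin d)) 1)
      (r : Fin q → Metric.sphere (0 : EuclideanSpace ℝ (Fin d)) 1),
      e0.symm (s, r) = Fin.cons s r := by
    intro s r
    rw [he0, MeasurableEquiv.piFinSuccAbove_symm_apply]
    exact Fin.insertNth_zero' s r
  have hrest_cons : ∀ s r, rest (e0.symm (s, r)) = r := by
    intro s r; rw [he0symm]; funext j; simp [hrest]
  have hzero_cons : ∀ s r, (e0.symm (s, r)) 0 = s := by
    intro s r; rw [he0symm]; rfl
  -- N0 is null
  have hN0null : (Measure.pi fun _ : Fin (q+1) => ν) N0 = 0 := by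
    refine measure_iUnion_null fun l => measure_iUnion_null fun m => measure_iUnion_null fun hlm => ?_
    exact Measure.pi_eval_preimage_null _
      (aux_nu_hyperplane_null ν hν (sub_ne_zero.mpr fun h => hlm (hz h)))
  -- Ndet is null
  have hNdetnull : (Measure.pi fun _ : Fin (q+1) => ν) Ndet = 0 := by
    rw [hkey Ndet hNdetm]
    have hpre : ⇑e0.symm ⁻¹' Ndet = Set.univ ×ˢ {r | (Mat r).det = 0} := by
      ext ⟨s, r⟩
      simp only [Set.mem_preimage, hNdetdef, Set.mem_setOf_eq, Set.mem_prod, Set.mem_univ,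
        true_and, hrest_cons]
    rw [hpre, Measure.prod_prod, measure_univ, one_mul]
    have hBq : {r : Fin q → Metric.sphere (0 : EuclideanSpace ℝ (Fin d)) 1 | (Mat r).det = 0}
        = {r : Fin q → Metric.sphere (0 : EuclideanSpace ℝ (Fin d)) 1 |
            (fun i : Fin d => r (Fin.castLE hdq i)) ∈
            {v : Fin d → Metric.sphere (0 : EuclideanSpace ℝ (Fin d)) 1 |
              (Matrix.of fun i j => (inner ℝ (v i : EuclideanSpace ℝ (Fin d))
                (v j : EuclideanSpace ℝ (Fin d)) : ℝ)).det = 0}} := by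
      ext r
      simp only [Set.mem_setOf_eq]
      rw [aux_gram_sq (fun i => (r (Fin.castLE hdq i) : EuclideanSpace ℝ (Fin d)))]
      rw [pow_eq_zero_iff (two_ne_zero)]
    rw [hBq]
    refine aux_proj_null ν _ ?_ (aux_gram_pi_null ν hν d le_rfl) q hdq
    exact aux_cont_gram.measurable (measurableSet_singleton (0:ℝ))
  -- N2 is null
  have hN2null : ∀ τ l, (Measure.pi fun _ : Fin (q+1) => ν) (N2 τ l) = 0 := by
    intro τ l
    rw [hkey _ (hN2m τ l)]
    rw [Measure.prod_apply_symm (e0.symm.measurable (hN2m τ l))]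
    have hz0 : ∀ r, ν ((fun s => (s, r)) ⁻¹' (⇑e0.symm ⁻¹' N2 τ l)) = 0 := by
      intro r
      by_cases hc : (Mat r).det ≠ 0 ∧ xstar τ r ∉ Set.range z
      · refine measure_mono_null ?_ (aux_nu_hyperplane_null ν hν
          (v := xstar τ r - z l) (sub_ne_zero.mpr fun h => hc.2 ⟨l, h.symm⟩))
        intro s hs
        simp only [Set.mem_preimage, hN2def, Set.mem_setOf_eq, hrest_cons, hzero_cons] at hs
        exact hs.2.2
      · have : ((fun s => (s, r)) ⁻¹' (⇑e0.symm ⁻¹' N2 τ l)) = ∅ := by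
          ext s
          simp only [Set.mem_preimage, hN2def, Set.mem_setOf_eq, hrest_cons, hzero_cons,
            Set.mem_empty_iff_false, iff_false]
          intro hs
          exact hc ⟨hs.1, hs.2.1⟩
        rw [this, measure_empty]
    simp only [hz0]
    simp
  -- total null set
  set N := (N0 ∪ Ndet) ∪ ⋃ τ, ⋃ l, N2 τ l with hNdef
  have hNm : MeasurableSet N :=
    (hN0m.union hNdetm).union
      (MeasurableSet.iUnion fun τ => MeasurableSet.iUnion fun l => hN2m τ l)
  have hNnull : (Measure.pi fun _ : Fin (q+1) => ν) N = 0 := by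
    refine measure_union_null (measure_union_null hN0null hNdetnull) ?_
    exact measure_iUnion_null fun τ => measure_iUnion_null fun l => hN2null τ l
  -- the deterministic part
  have hsub : Nᶜ ⊆ {θ : Fin (q+1) → Metric.sphere (0 : EuclideanSpace ℝ (Fin d)) 1 |
        ∀ α : Measure (EuclideanSpace ℝ (Fin d)), IsProbabilityMeasure α →
          (∫⁻ x, ENNReal.ofReal (‖x‖ ^ 2) ∂α) < ⊤ →
          (∀ i, α.map (fun x => @inner ℝ _ _ ((θ i : EuclideanSpace ℝ (Fin d))) x) =
                γZ.map (fun x => @inner ℝ _ _ ((θ i : EuclideanSpace ℝ (Fin d))) x)) →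
          α = γZ} := by
    intro θ hθ
    rw [Set.mem_compl_iff, hNdef] at hθ
    simp only [Set.mem_union, not_or] at hθ
    obtain ⟨⟨hθ0, hθdet⟩, hθ2⟩ := hθ
    have hG0 : ∀ l m : Fin n, l ≠ m →
        (inner ℝ ((θ 0 : EuclideanSpace ℝ (Fin d))) (z l - z m) : ℝ) ≠ 0 := by
      intro l m hlm h
      exact hθ0 (Set.mem_iUnion.mpr ⟨l, Set.mem_iUnion.mpr ⟨m, Set.mem_iUnion.mpr ⟨hlm, h⟩⟩⟩)
    have hGdet : (Mat (rest θ)).det ≠ 0 := fun h => hθdet h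
    have hG2 : ∀ τ l, ¬ ((Mat (rest θ)).det ≠ 0 ∧ xstar τ (rest θ) ∉ Set.range z ∧
        (inner ℝ ((θ 0 : EuclideanSpace ℝ (Fin d))) (xstar τ (rest θ) - z l) : ℝ) = 0) := by
      intro τ l h
      exact hθ2 (Set.mem_iUnion.mpr ⟨τ, Set.mem_iUnion.mpr ⟨l, h⟩⟩)
    intro α hα _ hproj
    set f : Fin (q+1) → EuclideanSpace ℝ (Fin d) → ℝ :=
      fun i x => (inner ℝ ((θ i : EuclideanSpace ℝ (Fin d))) x : ℝ) with hfdef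
    have hfm : ∀ i, Measurable (f i) :=
      fun i => (Continuous.inner continuous_const continuous_id).measurable
    have hfb : ∀ i (B : Set ℝ), MeasurableSet B → α (f i ⁻¹' B) = γZ (f i ⁻¹' B) := by
      intro i B hB
      rw [← Measure.map_apply (hfm i) hB, ← Measure.map_apply (hfm i) hB, hproj i]
    have hγ_apply : ∀ s : Set (EuclideanSpace ℝ (Fin d)), MeasurableSet s →
        γZ s = ∑ l, ENNReal.ofReal (b l) * s.indicator 1 (z l) := by
      intro s hs
      rw [hγZ, Measure.finset_sum_apply]
      refine Finset.sum_congr rfl fun l _ => ?_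
      rw [Measure.smul_apply, Measure.dirac_apply' _ hs, smul_eq_mul]
    have hsum1 : (∑ l, ENNReal.ofReal (b l)) = 1 := by
      rw [← ENNReal.ofReal_sum_of_nonneg (fun l _ => (hb l).le), hbsum, ENNReal.ofReal_one]
    have hγ_univ : γZ Set.univ = 1 := by
      rw [hγ_apply _ MeasurableSet.univ]
      simp only [Set.indicator_univ, Pi.one_apply, mul_one]
      exact hsum1
    have hγ_range : γZ (Set.range z) = 1 := by
      rw [hγ_apply _ hrangem]
      have : ∀ l, (Set.range z).indicator (1 : EuclideanSpace ℝ (Fin d) → ℝ≥0∞) (z l) = 1 :=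
        fun l => Set.indicator_of_mem (Set.mem_range_self l) 1
      simp only [this, mul_one]
      exact hsum1
    -- the geometric core
    have hcore : ∀ x : EuclideanSpace ℝ (Fin d),
        (∀ i, ∃ l, f i x = f i (z l)) → x ∈ Set.range z := by
      intro x hx
      by_contra hxr
      set τ : Fin d → Fin n := fun i => Classical.choose (hx ((Fin.castLE hdq i).succ)) with hτ
      have hτs : ∀ i : Fin d,
          f ((Fin.castLE hdq i).succ) x = f ((Fin.castLE hdq i).succ) (z (τ i)) :=
        fun i => Classical.choose_spec (hx ((Fin.castLE hdq i).succ))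
      have hsys : (Mat (rest θ)).mulVec (fun j => x j) = cvec τ (rest θ) := by
        funext i
        have h1 : (Mat (rest θ)).mulVec (fun j => x j) i
            = (inner ℝ ((rest θ (Fin.castLE hdq i) : EuclideanSpace ℝ (Fin d))) x : ℝ) := by
          simp [hMat, Matrix.mulVec, dotProduct, PiLp.inner_apply, RCLike.inner_apply]
          exact Finset.sum_congr rfl fun _ _ => mul_comm _ _
        rw [h1]
        exact hτs i
      have hxeq : xstar τ (rest θ) = x := by
        have h2 := aux_solve _ hGdet hsys
        show (EuclideanSpace.equiv (Fin d) ℝ).symm ((Mat (rest θ))⁻¹.mulVec (cvec τ (rest θ))) = x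
        rw [← h2]; rfl
      obtain ⟨l0, hl0⟩ := hx 0
      refine hG2 τ l0 ⟨hGdet, ?_, ?_⟩
      · rw [hxeq]; exact hxr
      · rw [hxeq, inner_sub_right, sub_eq_zero]
        exact hl0
    -- α is concentrated on the range of z
    have hrc : α (Set.range z)ᶜ = 0 := by
      have hBi : ∀ i, α ((f i) ⁻¹' (Set.range fun l : Fin n => f i (z l))) = 1 := by
        intro i
        have hBm' : MeasurableSet (Set.range fun l : Fin n => f i (z l)) :=
          (Set.finite_range _).measurableSet
        rw [hfb i _ hBm']
        refine le_antisymm (le_trans (measure_mono (Set.subset_univ _)) (le_of_eq hγ_univ)) ?_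
        refine le_trans (le_of_eq hγ_range.symm) (measure_mono ?_)
        rintro _ ⟨l, rfl⟩
        exact ⟨l, rfl⟩
      have hcompl0 : α (⋃ i, ((f i) ⁻¹' (Set.range fun l : Fin n => f i (z l)))ᶜ) = 0 :=
        measure_iUnion_null fun i => by
          rw [measure_compl ((hfm i) (Set.finite_range _).measurableSet) (measure_ne_top _ _),
            hBi i, measure_univ, tsub_self]
      refine measure_mono_null ?_ hcompl0
      intro x hxr
      by_contra hxx
      simp only [Set.mem_iUnion, Set.mem_compl_iff, not_exists, not_not] at hxx
      refine hxr (hcore x fun i => ?_)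
      obtain ⟨l, hl⟩ := hxx i
      exact ⟨l, hl.symm⟩
    have hrange1 : α (Set.range z) = 1 := by
      have h2 := measure_add_measure_compl (μ := α) hrangem
      rw [hrc, add_zero, measure_univ] at h2
      exact h2
    -- atoms of α
    have hatom : ∀ l, α {z l} = ENNReal.ofReal (b l) := by
      intro l
      have hPre : α (f 0 ⁻¹' {f 0 (z l)}) = γZ (f 0 ⁻¹' {f 0 (z l)}) :=
        hfb 0 _ (measurableSet_singleton _)
      have hγval : γZ (f 0 ⁻¹' {f 0 (z l)}) = ENNReal.ofReal (b l) := by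
        rw [hγ_apply _ ((hfm 0) (measurableSet_singleton _))]
        rw [Finset.sum_eq_single l]
        · rw [Set.indicator_of_mem (show z l ∈ f 0 ⁻¹' {f 0 (z l)} from rfl), Pi.one_apply,
            mul_one]
        · intro m _ hml
          have hnm : z m ∉ f 0 ⁻¹' {f 0 (z l)} := by
            intro h
            have h3 : f 0 (z m) = f 0 (z l) := h
            refine hG0 m l hml ?_
            rw [inner_sub_right, sub_eq_zero]
            exact h3
          rw [Set.indicator_of_notMem hnm, mul_zero]
        · intro h; exact absurd (Finset.mem_univ l) h
      have hint : (f 0 ⁻¹' {f 0 (z l)}) ∩ Set.range z = {z l} := by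
        ext x
        constructor
        · rintro ⟨hfx, m, rfl⟩
          have h3 : f 0 (z m) = f 0 (z l) := hfx
          have : m = l := by
            by_contra hml
            refine hG0 m l hml ?_
            rw [inner_sub_right, sub_eq_zero]
            exact h3
          rw [this]; rfl
        · rintro rfl
          exact ⟨rfl, Set.mem_range_self l⟩
      have hdiff : α ((f 0 ⁻¹' {f 0 (z l)}) \ Set.range z) = 0 :=
        measure_mono_null (fun x hx => hx.2) hrc
      have h4 := measure_inter_add_diff (μ := α) (f 0 ⁻¹' {f 0 (z l)}) hrangem
      rw [hint, hdiff, add_zero] at h4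
      rw [h4, hPre, hγval]
    -- conclude α = γZ
    refine Measure.ext fun s hs => ?_
    rw [hγ_apply s hs]
    have hdiff : α (s \ Set.range z) = 0 := measure_mono_null (fun x hx => hx.2) hrc
    have h4 := measure_inter_add_diff (μ := α) s hrangem
    rw [hdiff, add_zero] at h4
    rw [← h4]
    have hinter : s ∩ Set.range z
        = ⋃ l ∈ Finset.univ.filter (fun l : Fin n => z l ∈ s), ({z l} : Set _) := by
      ext x
      simp only [Set.mem_inter_iff, Set.mem_range, Finset.mem_filter, Finset.mem_univ, true_and,
        Set.mem_iUnion, Set.mem_singleton_iff]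
      constructor
      · rintro ⟨hxs, l, rfl⟩; exact ⟨l, hxs, rfl⟩
      · rintro ⟨l, hl, rfl⟩; exact ⟨hl, l, rfl⟩
    rw [hinter, measure_biUnion_finset ?_ (fun l _ => measurableSet_singleton _)]
    · rw [Finset.sum_congr rfl (fun l _ => hatom l), Finset.sum_filter]
      refine Finset.sum_congr rfl fun l _ => ?_
      by_cases hl : z l ∈ s
      · rw [if_pos hl, Set.indicator_of_mem hl, Pi.one_apply, mul_one]
      · rw [if_neg hl, Set.indicator_of_notMem hl, mul_zero]
    · intro l _ m _ hlm
      simp only [Function.onFun, Set.disjoint_singleton]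
      exact fun h => hlm (hz h)
  have h1 : (Measure.pi fun _ : Fin (q+1) => ν) Nᶜ = 1 := by
    rw [measure_compl hNm (measure_ne_top _ _), hNnull, measure_univ, tsub_zero]
  exact le_antisymm prob_le_one (h1 ▸ measure_mono hsub)
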